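/- arXiv:2108.07054 — 6 statements merged into one kernel-verified Lean document; each statement's English description precedes it below -/
import Mathlib

section
/- Let A and B be m×m real symmetric matrices with B invertible, and suppose that A and B⁻¹ are in finite free position. Then det(xI − AB) = [det(xI − A) ⊠_m det(xI − B)] as polynomials in x. -/
open Polynomial Matrix

/-- The symmetric additive convolution of two polynomials of degree (at most) `m`:
`[p ⊞_m q](x) = (1/m!) ∑_{i=0}^m p^{(i)}(x) · q^{(m-i)}(0)`. -/
noncomputable def boxplus (m : ℕ) (p q : ℝ[X]) : ℝ[X] :=
  (m.factorial : ℝ)⁻¹ •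
    ∑ i ∈ Finset.range (m + 1),
      C ((Polynomial.derivative^[m - i] q).eval 0) * Polynomial.derivative^[i] p

/-- The symmetric multiplicative convolution of two degree-`m` polynomials
`p(x) = ∑ (-1)^i p_i x^{m-i}`, `q(x) = ∑ (-1)^i q_i x^{m-i}`:
`[p ⊠_m q](x) = ∑_{i=0}^m x^{m-i} (-1)^i p_i q_i / C(m,i)`, where
`p_i = (-1)^i · coeff p (m-i)`. -/
noncomputable def boxtimes (m : ℕ) (p q : ℝ[X]) : ℝ[X] :=
  ∑ i ∈ Finset.range (m + 1),
    C ((-1 : ℝ) ^ i * p.coeff (m - i) * q.coeff (m - i) / (m.choose i : ℝ)) *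
      (X : ℝ[X]) ^ (m - i)

/-- Two `m × m` real symmetric matrices `A`, `B` are in finite free position if
`det(xI - yA - zB) = [det(xI - yA) ⊞_m det(xI - zB)]` for all real `y, z`. -/
def FiniteFreePosition (m : ℕ) (A B : Matrix (Fin m) (Fin m) ℝ) : Prop :=
  ∀ y z : ℝ, (y • A + z • B).charpoly = boxplus m (y • A).charpoly (z • B).charpoly

lemma eval_charpoly' {m : ℕ} (M : Matrix (Fin m) (Fin m) ℝ) (t : ℝ) :
    M.charpoly.eval t = (t • (1 : Matrix (Fin m) (Fin m) ℝ) - M).det := by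
  rw [Matrix.charpoly, ← Polynomial.coe_evalRingHom, RingHom.map_det]
  congr 1
  ext i j
  by_cases hij : i = j
  · subst hij
    simp [charmatrix_apply_eq, Matrix.one_apply, Matrix.sub_apply]
  · simp [charmatrix_apply_ne _ _ _ hij, Matrix.one_apply, hij, Matrix.sub_apply]

lemma charpoly_natdeg {m : ℕ} (M : Matrix (Fin m) (Fin m) ℝ) :
    M.charpoly.natDegree < m + 1 := by
  have := Matrix.charpoly_natDegree_eq_dim M
  simp only [Fintype.card_fin] at this
  omega

lemma iter_deriv_eval_zero (f : ℝ[X]) (k : ℕ) :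
    (Polynomial.derivative^[k] f).eval 0 = (k.factorial : ℝ) * f.coeff k := by
  rw [← Polynomial.coeff_zero_eq_eval_zero, Polynomial.coeff_iterate_derivative]
  simp [Nat.descFactorial_self, nsmul_eq_mul]

lemma charpoly_smul_coeff {m : ℕ} (M : Matrix (Fin m) (Fin m) ℝ) {z : ℝ} (hz : z ≠ 0)
    {k : ℕ} (hk : k ≤ m) :
    ((z • M).charpoly).coeff k = z ^ (m - k) * M.charpoly.coeff k := by
  have key : (z • M).charpoly
      = ∑ j ∈ Finset.range (m + 1), C (z ^ (m - j) * M.charpoly.coeff j) * X ^ j := by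
    apply Polynomial.funext
    intro t
    rw [eval_charpoly']
    have h1 : t • (1 : Matrix (Fin m) (Fin m) ℝ) - z • M
        = z • ((z⁻¹ * t) • (1 : Matrix (Fin m) (Fin m) ℝ) - M) := by
      rw [smul_sub, smul_smul, mul_inv_cancel_left₀ hz]
    rw [h1, Matrix.det_smul, ← eval_charpoly',
      Polynomial.eval_eq_sum_range' (charpoly_natdeg M) (z⁻¹ * t)]
    simp only [Polynomial.eval_finset_sum, Polynomial.eval_mul, Polynomial.eval_C,
      Polynomial.eval_pow, Polynomial.eval_X, Fintype.card_fin, Finset.mul_sum]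
    refine Finset.sum_congr rfl fun j hj => ?_
    have hj' : j ≤ m := Nat.lt_succ_iff.mp (Finset.mem_range.mp hj)
    have hzp : z ^ (m - j) * z ^ j = z ^ m := by rw [← pow_add, Nat.sub_add_cancel hj']
    field_simp
    rw [← hzp]
    have hzj : z ^ j * z⁻¹ ^ j = 1 := by rw [← mul_pow, mul_inv_cancel₀ hz, one_pow]
    linear_combination (z ^ (m - j) * M.charpoly.coeff j * t ^ j) * hzj
  rw [key, Polynomial.finset_sum_coeff]
  simp only [Polynomial.coeff_C_mul, Polynomial.coeff_X_pow, mul_ite, mul_one, mul_zero]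
  rw [Finset.sum_ite_eq (Finset.range (m + 1))]
  simp [Nat.lt_succ_iff.mpr hk]

lemma charpoly_inv_coeff {m : ℕ} (B : Matrix (Fin m) (Fin m) ℝ) (hB : IsUnit B)
    {k : ℕ} (hk : k ≤ m) :
    (B⁻¹).charpoly.coeff k = (-1 : ℝ) ^ m * (B.det)⁻¹ * B.charpoly.coeff (m - k) := by
  have hdet : IsUnit B.det := (Matrix.isUnit_iff_isUnit_det B).mp hB
  have hdet0 : B.det ≠ 0 := hdet.ne_zero
  have key : (B⁻¹).charpoly
      = ∑ j ∈ Finset.range (m + 1),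
          C ((-1 : ℝ) ^ m * (B.det)⁻¹ * B.charpoly.coeff (m - j)) * X ^ j := by
    apply Polynomial.eq_of_infinite_eval_eq
    have hinf : ({t : ℝ | t ≠ 0}).Infinite := by
      have := (Set.finite_singleton (0 : ℝ)).infinite_compl
      simpa [Set.compl_def] using this
    refine hinf.mono ?_
    intro t ht
    simp only [Set.mem_setOf_eq] at ht ⊢
    rw [eval_charpoly']
    have h1 : t • (1 : Matrix (Fin m) (Fin m) ℝ) - B⁻¹ = B⁻¹ * (t • B - 1) := by
      rw [Matrix.mul_sub, mul_smul_comm, Matrix.nonsing_inv_mul B hdet, Matrix.mul_one]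
    have h2 : t • B - (1 : Matrix (Fin m) (Fin m) ℝ)
        = t • (B - t⁻¹ • (1 : Matrix (Fin m) (Fin m) ℝ)) := by
      rw [smul_sub, smul_smul, mul_inv_cancel₀ ht, one_smul]
    have h3 : B - t⁻¹ • (1 : Matrix (Fin m) (Fin m) ℝ)
        = -(t⁻¹ • (1 : Matrix (Fin m) (Fin m) ℝ) - B) := (neg_sub _ _).symm
    rw [h1, Matrix.det_mul, h2, Matrix.det_smul, h3, Matrix.det_neg, Fintype.card_fin,
      ← eval_charpoly', Matrix.det_nonsing_inv, Ring.inverse_eq_inv',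
      Polynomial.eval_eq_sum_range' (charpoly_natdeg B) t⁻¹]
    simp only [Polynomial.eval_finset_sum, Polynomial.eval_mul, Polynomial.eval_C,
      Polynomial.eval_pow, Polynomial.eval_X]
    rw [← Finset.sum_range_reflect
      (fun j => (-1 : ℝ) ^ m * (B.det)⁻¹ * B.charpoly.coeff (m - j) * t ^ j) (m + 1)]
    simp only [Finset.mul_sum, Nat.add_sub_cancel]
    refine Finset.sum_congr rfl fun j hj => ?_
    have hj' : j ≤ m := Nat.lt_succ_iff.mp (Finset.mem_range.mp hj)
    rw [Nat.sub_sub_self hj']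
    have htp : t ^ (m - j) * t ^ j = t ^ m := by rw [← pow_add, Nat.sub_add_cancel hj']
    field_simp
    rw [← htp]
    have htj : t ^ j * t⁻¹ ^ j = 1 := by rw [← mul_pow, mul_inv_cancel₀ ht, one_pow]
    linear_combination (t ^ (m - j) * B.charpoly.coeff j) * htj
  rw [key, Polynomial.finset_sum_coeff]
  simp only [Polynomial.coeff_C_mul, Polynomial.coeff_X_pow, mul_ite, mul_one, mul_zero]
  rw [Finset.sum_ite_eq (Finset.range (m + 1))]
  simp [Nat.lt_succ_iff.mpr hk]

/-- **Finite free position with the inverse instantiates the multiplicative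
convolution.** If `B` is invertible and `A` and `B⁻¹` are in finite free position, then
`det(xI - AB) = [det(xI - A) ⊠_m det(xI - B)]`. -/
theorem charpoly_mul_eq_boxtimes (m : ℕ) (A B : Matrix (Fin m) (Fin m) ℝ)
    (hA : A.IsSymm) (hB : B.IsSymm) (hBinv : IsUnit B)
    (h : FiniteFreePosition m A B⁻¹) :
    (A * B).charpoly = boxtimes m A.charpoly B.charpoly := by
  have hdet : IsUnit B.det := (Matrix.isUnit_iff_isUnit_det B).mp hBinv
  have hdet0 : B.det ≠ 0 := hdet.ne_zero
  apply Polynomial.eq_of_infinite_eval_eq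
  have hinf : ({x : ℝ | x ≠ 0}).Infinite := by
    have := (Set.finite_singleton (0 : ℝ)).infinite_compl
    simpa [Set.compl_def] using this
  refine hinf.mono ?_
  intro x hx
  simp only [Set.mem_setOf_eq] at hx ⊢
  have hnx : (-x : ℝ) ≠ 0 := neg_ne_zero.mpr hx
  -- LHS: det(xI - AB) = det(xB⁻¹ - A) * det B
  rw [eval_charpoly']
  have h1 : x • (1 : Matrix (Fin m) (Fin m) ℝ) - A * B = (x • B⁻¹ - A) * B := by
    rw [Matrix.sub_mul, Matrix.smul_mul, Matrix.nonsing_inv_mul B hdet]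
  have h2 : x • B⁻¹ - A
      = (0 : ℝ) • (1 : Matrix (Fin m) (Fin m) ℝ) - ((1 : ℝ) • A + (-x) • B⁻¹) := by
    rw [zero_smul, zero_sub, one_smul, neg_add, neg_smul, neg_neg]
    abel
  rw [h1, Matrix.det_mul, h2, ← eval_charpoly', h 1 (-x), one_smul]
  -- expand boxplus at 0
  rw [boxplus]
  simp only [Polynomial.eval_smul, Polynomial.eval_finset_sum, Polynomial.eval_mul,
    Polynomial.eval_C, smul_eq_mul]
  -- rewrite each term using the coefficient lemmas
  have hterm : ∀ i ∈ Finset.range (m + 1),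
      (Polynomial.derivative^[m - i] ((-x) • B⁻¹).charpoly).eval 0 *
        (Polynomial.derivative^[i] A.charpoly).eval 0
      = ((m - i).factorial : ℝ) * ((-x) ^ i * ((-1 : ℝ) ^ m * (B.det)⁻¹ *
          B.charpoly.coeff i)) * ((i.factorial : ℝ) * A.charpoly.coeff i) := by
    intro i hi
    have hi' : i ≤ m := Nat.lt_succ_iff.mp (Finset.mem_range.mp hi)
    rw [iter_deriv_eval_zero, iter_deriv_eval_zero,
      charpoly_smul_coeff B⁻¹ hnx (Nat.sub_le m i),
      charpoly_inv_coeff B hBinv (Nat.sub_le m i), Nat.sub_sub_self hi']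
  rw [Finset.sum_congr rfl hterm]
  -- RHS: expand boxtimes and reflect the sum
  rw [boxtimes]
  simp only [Polynomial.eval_finset_sum, Polynomial.eval_mul, Polynomial.eval_C,
    Polynomial.eval_pow, Polynomial.eval_X]
  conv_rhs => rw [← Finset.sum_range_reflect
    (fun i => (-1 : ℝ) ^ i * A.charpoly.coeff (m - i) * B.charpoly.coeff (m - i) /
      (m.choose i : ℝ) * x ^ (m - i)) (m + 1)]
  simp only [Nat.add_sub_cancel, Finset.mul_sum, Finset.sum_mul]
  refine Finset.sum_congr rfl fun i hi => ?_
  have hi' : i ≤ m := Nat.lt_succ_iff.mp (Finset.mem_range.mp hi)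
  rw [Nat.sub_sub_self hi', Nat.choose_symm hi']
  have hfact : ((m.choose i : ℝ)) * (i.factorial : ℝ) * ((m - i).factorial : ℝ)
      = (m.factorial : ℝ) := by
    exact_mod_cast congrArg (Nat.cast : ℕ → ℝ)
      (Nat.choose_mul_factorial_mul_factorial hi')
  have hchoose0 : ((m.choose i : ℝ)) ≠ 0 := by
    exact_mod_cast Nat.choose_pos hi' |>.ne'
  have hm0 : ((m.factorial : ℝ)) ≠ 0 := by exact_mod_cast (Nat.factorial_pos m).ne'
  have hsign : (-1 : ℝ) ^ m * (-1 : ℝ) ^ i = (-1 : ℝ) ^ (m - i) := by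
    have hmi : m + i = (m - i) + 2 * i := by omega
    rw [← pow_add, hmi, pow_add, pow_mul, neg_one_sq, one_pow, mul_one]
  have hnxp : (-x : ℝ) ^ i = (-1 : ℝ) ^ i * x ^ i := by
    rw [neg_pow]
  have hi0 : (i.factorial : ℝ) ≠ 0 := by exact_mod_cast (Nat.factorial_pos i).ne'
  have hmi0 : ((m - i).factorial : ℝ) ≠ 0 := by exact_mod_cast (Nat.factorial_pos (m - i)).ne'
  rw [hnxp, ← hsign, ← hfact]
  field_simp
end

section
/- Let p and q be real polynomials of degree at most m, and let D denote the derivative operator on polynomials. Then for every nonnegative integer k, [D^k p ⊞_m q] = [p ⊞_m D^k q] = D^k [p ⊞_m q]. -/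
open Polynomial

private lemma boxplus_derivative_left (m : ℕ) (p q : ℝ[X]) :
    boxplus m (derivative p) q = derivative (boxplus m p q) := by
  unfold boxplus
  rw [derivative_smul, Finset.sum_congr rfl, ← Polynomial.derivative_sum]
  intro i _
  rw [derivative_C_mul, ← Function.iterate_succ_apply, Function.iterate_succ_apply']

private lemma boxplus_derivative_swap (m : ℕ) (p q : ℝ[X])
    (hp : p.natDegree ≤ m) (hq : q.natDegree ≤ m) :
    boxplus m (derivative p) q = boxplus m p (derivative q) := by
  unfold boxplus
  congr 1
  rw [Finset.sum_range_succ, Finset.sum_range_succ']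
  have h1 : (Polynomial.derivative^[m+1] p) = 0 :=
    iterate_derivative_eq_zero (lt_of_le_of_lt hp (Nat.lt_succ_self m))
  have h2 : (Polynomial.derivative^[m+1] q) = 0 :=
    iterate_derivative_eq_zero (lt_of_le_of_lt hq (Nat.lt_succ_self m))
  have e1 : Polynomial.derivative^[m] (derivative p) = 0 := by
    rw [← Function.iterate_succ_apply]; exact h1
  have e2 : Polynomial.derivative^[m - 0] (derivative q) = 0 := by
    rw [Nat.sub_zero, ← Function.iterate_succ_apply]; exact h2
  rw [e1, e2]
  simp only [eval_zero, map_zero, mul_zero, zero_mul, add_zero]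
  apply Finset.sum_congr rfl
  intro i hi
  rw [Finset.mem_range] at hi
  have h3 : m - i = (m - (i + 1)) + 1 := by omega
  rw [← Function.iterate_succ_apply, h3, Function.iterate_succ_apply]

private lemma boxplus_derivative_right (m : ℕ) (p q : ℝ[X])
    (hp : p.natDegree ≤ m) (hq : q.natDegree ≤ m) :
    boxplus m p (derivative q) = derivative (boxplus m p q) := by
  rw [← boxplus_derivative_swap m p q hp hq, boxplus_derivative_left]

/-- **Derivatives commute with the additive convolution.** For real polynomials `p`, `q`
of degree at most `m` and any `k`,
`[D^k p ⊞_m q] = [p ⊞_m D^k q] = D^k [p ⊞_m q]`. -/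
theorem boxplus_iterate_derivative (m : ℕ) (p q : ℝ[X])
    (hp : p.natDegree ≤ m) (hq : q.natDegree ≤ m) (k : ℕ) :
    boxplus m (Polynomial.derivative^[k] p) q =
        boxplus m p (Polynomial.derivative^[k] q) ∧
      boxplus m p (Polynomial.derivative^[k] q) =
        Polynomial.derivative^[k] (boxplus m p q) := by
  have hL : ∀ k, boxplus m (Polynomial.derivative^[k] p) q =
      Polynomial.derivative^[k] (boxplus m p q) := by
    intro k
    induction k with
    | zero => rfl
    | succ n ih =>
        rw [Function.iterate_succ_apply', Function.iterate_succ_apply',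
          boxplus_derivative_left, ih]
  have hR : ∀ k, boxplus m p (Polynomial.derivative^[k] q) =
      Polynomial.derivative^[k] (boxplus m p q) := by
    intro k
    induction k with
    | zero => rfl
    | succ n ih =>
        have hq' : (Polynomial.derivative^[n] q).natDegree ≤ m :=
          le_trans (natDegree_iterate_derivative q n) (le_trans (Nat.sub_le _ _) hq)
        rw [Function.iterate_succ_apply', Function.iterate_succ_apply',
          boxplus_derivative_right m p _ hp hq', ih]
  exact ⟨(hL k).trans (hR k).symm, hR k⟩
end

section
/- For every monic real polynomial p of degree m, there exists a monic real polynomial q of degree m such that [p ⊞_m q](x) = x^m. -/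
open Polynomial

lemma span_aux : ∀ (m : ℕ) (f : ℕ → ℝ[X]),
    (∀ i ≤ m, (f i).natDegree ≤ m - i ∧ (f i).coeff (m - i) ≠ 0) →
    ∀ g : ℝ[X], g.natDegree ≤ m →
    ∃ c : ℕ → ℝ, ∑ i ∈ Finset.range (m + 1), c i • f i = g ∧
      c 0 = g.coeff m / (f 0).coeff m := by
  intro m
  induction m with
  | zero =>
    intro f hf g hg
    obtain ⟨h0, hne⟩ := hf 0 le_rfl
    refine ⟨fun _ => g.coeff 0 / (f 0).coeff 0, ?_, rfl⟩
    have hf0 : f 0 = C ((f 0).coeff 0) := (Polynomial.eq_C_of_natDegree_le_zero h0)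
    have hg0 : g = C (g.coeff 0) := (Polynomial.eq_C_of_natDegree_le_zero hg)
    rw [Finset.sum_range_one, hf0, smul_C]
    rw [Nat.sub_zero] at hne
    field_simp
    rw [coeff_C_zero, smul_eq_mul, div_mul_cancel₀ _ hne]
    exact hg0.symm
  | succ m ih =>
    intro f hf g hg
    obtain ⟨h0, hne⟩ := hf 0 (Nat.zero_le _)
    rw [Nat.sub_zero] at h0 hne
    set c0 : ℝ := g.coeff (m + 1) / (f 0).coeff (m + 1) with hc0
    set g' : ℝ[X] := g - c0 • f 0 with hg'
    have hg'deg : g'.natDegree ≤ m := by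
      rw [Polynomial.natDegree_le_iff_coeff_eq_zero]
      intro k hk
      rcases eq_or_lt_of_le (Nat.succ_le_of_lt hk) with hk1 | hk1
      · simp only [hg', Polynomial.coeff_sub, Polynomial.coeff_smul, smul_eq_mul, ← hk1, hc0]
        field_simp
        simp
      · simp only [hg', Polynomial.coeff_sub, Polynomial.coeff_smul, smul_eq_mul]
        rw [Polynomial.coeff_eq_zero_of_natDegree_lt (lt_of_le_of_lt hg hk1),
          Polynomial.coeff_eq_zero_of_natDegree_lt (lt_of_le_of_lt h0 hk1)]
        ring
    have hf' : ∀ i ≤ m, ((fun i => f (i + 1)) i).natDegree ≤ m - i ∧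
        ((fun i => f (i + 1)) i).coeff (m - i) ≠ 0 := by
      intro i hi
      have := hf (i + 1) (by omega)
      have hd : m + 1 - (i + 1) = m - i := by omega
      rw [hd] at this
      exact this
    obtain ⟨c', hc', -⟩ := ih (fun i => f (i + 1)) hf' g' hg'deg
    refine ⟨fun i => if i = 0 then c0 else c' (i - 1), ?_, rfl⟩
    rw [Finset.sum_range_succ']
    simp only [Nat.add_sub_cancel, if_neg (Nat.succ_ne_zero _), if_pos rfl]
    rw [hc']
    simp [hg']



/-- **Invertibility of the additive convolution on degree-`m` polynomials.** For every
monic real polynomial `p` of degree `m` there is a monic real polynomial `q` of degree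
`m` with `[p ⊞_m q](x) = x^m`. -/
theorem boxplus_exists_inverse (m : ℕ) (p : ℝ[X])
    (hp : p.Monic) (hpd : p.natDegree = m) :
    ∃ q : ℝ[X], q.Monic ∧ q.natDegree = m ∧ boxplus m p q = (X : ℝ[X]) ^ m := by
  have hpm : p.coeff m = 1 := hpd ▸ hp.coeff_natDegree
  have hf : ∀ i ≤ m, ((fun i => Polynomial.derivative^[i] p) i).natDegree ≤ m - i ∧
      ((fun i => Polynomial.derivative^[i] p) i).coeff (m - i) ≠ 0 := by
    intro i hi
    constructor
    · have := Polynomial.natDegree_iterate_derivative p i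
      rwa [hpd] at this
    · rw [Polynomial.coeff_iterate_derivative, Nat.sub_add_cancel hi, hpm, nsmul_eq_mul, mul_one]
      have : m.descFactorial i ≠ 0 := by
        rw [Ne, Nat.descFactorial_eq_zero_iff_lt]; omega
      exact_mod_cast this
  have hgdeg : ((m.factorial : ℝ) • (X : ℝ[X]) ^ m).natDegree ≤ m := by
    refine (Polynomial.natDegree_smul_le _ _).trans ?_
    simp [Polynomial.natDegree_X_pow]
  obtain ⟨c, hc, hc0⟩ := span_aux m (fun i => Polynomial.derivative^[i] p) hf
    ((m.factorial : ℝ) • (X : ℝ[X]) ^ m) hgdeg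
  have hc0' : c 0 = m.factorial := by
    rw [hc0]
    simp [hpm, Polynomial.coeff_smul, Polynomial.coeff_X_pow]
  set q : ℝ[X] := ∑ j ∈ Finset.range (m + 1), C (c (m - j) / j.factorial) * X ^ j with hq
  have hqcoeff : ∀ k, q.coeff k = if k ≤ m then c (m - k) / k.factorial else 0 := by
    intro k
    rw [hq, Polynomial.finset_sum_coeff]
    simp only [Polynomial.coeff_C_mul, Polynomial.coeff_X_pow, mul_ite, mul_one, mul_zero]
    rw [Finset.sum_ite_eq (Finset.range (m + 1)) k]
    simp [Nat.lt_succ_iff]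
  have hqm : q.coeff m = 1 := by
    rw [hqcoeff m, if_pos le_rfl, Nat.sub_self, hc0']
    field_simp
  have hqle : q.natDegree ≤ m := by
    refine Polynomial.natDegree_sum_le_of_forall_le _ _ fun j hj => ?_
    refine (Polynomial.natDegree_C_mul_le _ _).trans ?_
    simp [Polynomial.natDegree_X_pow, Nat.lt_succ_iff.mp (Finset.mem_range.mp hj)]
  have hqmonic : q.Monic := Polynomial.monic_of_natDegree_le_of_coeff_eq_one m hqle hqm
  have hqdeg : q.natDegree = m :=
    le_antisymm hqle (Polynomial.le_natDegree_of_ne_zero (by rw [hqm]; norm_num))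
  have heval : ∀ i ≤ m, (Polynomial.derivative^[m - i] q).eval 0 = c i := by
    intro i hi
    rw [← Polynomial.coeff_zero_eq_eval_zero, Polynomial.coeff_iterate_derivative, zero_add,
      hqcoeff, if_pos (Nat.sub_le m i)]
    have h1 : m - (m - i) = i := by omega
    rw [h1, Nat.descFactorial_self, nsmul_eq_mul,
      mul_div_cancel₀ _ (by exact_mod_cast (m - i).factorial_ne_zero : ((m - i).factorial : ℝ) ≠ 0)]
  refine ⟨q, hqmonic, hqdeg, ?_⟩
  rw [boxplus]
  have hsum : ∑ i ∈ Finset.range (m + 1),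
      C ((Polynomial.derivative^[m - i] q).eval 0) * Polynomial.derivative^[i] p
      = ∑ i ∈ Finset.range (m + 1), c i • Polynomial.derivative^[i] p := by
    refine Finset.sum_congr rfl fun i hi => ?_
    rw [heval i (Nat.lt_succ_iff.mp (Finset.mem_range.mp hi)), Polynomial.smul_eq_C_mul]
  rw [hsum, hc, smul_smul, inv_mul_cancel₀ (by exact_mod_cast m.factorial_ne_zero), one_smul]
end

section
/- For all real polynomials p, q, r of degree at most m, the symmetric additive convolution is associative: [p ⊞_m [q ⊞_m r]] = [[p ⊞_m q] ⊞_m r]. -/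
open Polynomial

open Finset in
lemma boxplus_key (m : ℕ) (p q : ℝ[X]) (hp : p.natDegree ≤ m) (hq : q.natDegree ≤ m)
    (c : ℝ) (R : ℕ → ℝ) :
    (∑ x ∈ range (m + 1), c • ∑ y ∈ range (m + 1),
      (R y * (c * (derivative^[(m - x) + y] q).eval 0)) • derivative^[x] p)
    = ∑ x ∈ range (m + 1), ∑ y ∈ range (m + 1),
      (c * (c * ((derivative^[m - y] q).eval 0 * R x))) • derivative^[x + y] p := by
  simp only [Finset.smul_sum, smul_smul]
  rw [← Finset.sum_product' (f := fun x y =>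
      (c * (R y * (c * (derivative^[(m - x) + y] q).eval 0))) • derivative^[x] p),
    ← Finset.sum_product' (f := fun x y =>
      (c * (c * ((derivative^[m - y] q).eval 0 * R x))) • derivative^[x + y] p),
    ← Finset.sum_filter_add_sum_filter_not (range (m+1) ×ˢ range (m+1))
      (fun x => x.2 ≤ x.1),
    ← Finset.sum_filter_add_sum_filter_not (range (m+1) ×ˢ range (m+1))
      (fun x => x.1 + x.2 ≤ m)]
  have hz1 : ∀ x ∈ (range (m+1) ×ˢ range (m+1)).filter (fun x => ¬ x.2 ≤ x.1),
      (c * (R x.2 * (c * (derivative^[(m - x.1) + x.2] q).eval 0))) • derivative^[x.1] p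
        = 0 := by
    rintro ⟨i, j⟩ hx
    simp only [Finset.mem_filter, Finset.mem_product, Finset.mem_range, not_le] at hx
    rw [iterate_derivative_eq_zero (by omega : q.natDegree < (m - i) + j)]
    simp
  have hz2 : ∀ x ∈ (range (m+1) ×ˢ range (m+1)).filter (fun x => ¬ x.1 + x.2 ≤ m),
      (c * (c * ((derivative^[m - x.2] q).eval 0 * R x.1))) • derivative^[x.1 + x.2] p
        = 0 := by
    rintro ⟨k, i⟩ hx
    simp only [Finset.mem_filter, Finset.mem_product, Finset.mem_range, not_le] at hx
    rw [iterate_derivative_eq_zero (by omega : p.natDegree < k + i)]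
    simp
  rw [Finset.sum_eq_zero hz1, Finset.sum_eq_zero hz2, add_zero, add_zero]
  refine Finset.sum_nbij' (fun x => (x.2, x.1 - x.2)) (fun x => (x.1 + x.2, x.1)) ?_ ?_ ?_ ?_ ?_
  · rintro ⟨i, j⟩ hx
    simp only [Finset.mem_filter, Finset.mem_product, Finset.mem_range] at hx ⊢
    omega
  · rintro ⟨k, i⟩ hx
    simp only [Finset.mem_filter, Finset.mem_product, Finset.mem_range] at hx ⊢
    omega
  · rintro ⟨i, j⟩ hx
    simp only [Finset.mem_filter, Finset.mem_product, Finset.mem_range] at hx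
    simp only [Prod.mk.injEq]
    exact ⟨by omega, trivial⟩
  · rintro ⟨k, i⟩ hx
    simp only [Finset.mem_filter, Finset.mem_product, Finset.mem_range] at hx
    simp only [Prod.mk.injEq]
    exact ⟨trivial, by omega⟩
  · rintro ⟨i, j⟩ hx
    simp only [Finset.mem_filter, Finset.mem_product, Finset.mem_range] at hx
    have h1 : j + (i - j) = i := by omega
    have h2 : m - (i - j) = (m - i) + j := by omega
    rw [h1, h2]
    congr 1
    ring

/-- **Associativity of the symmetric additive convolution** on polynomials of degree at
most `m`: `[p ⊞_m [q ⊞_m r]] = [[p ⊞_m q] ⊞_m r]`. -/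
theorem boxplus_assoc (m : ℕ) (p q r : ℝ[X])
    (hp : p.natDegree ≤ m) (hq : q.natDegree ≤ m) (hr : r.natDegree ≤ m) :
    boxplus m p (boxplus m q r) = boxplus m (boxplus m p q) r := by
  unfold boxplus
  simp only [iterate_derivative_smul, iterate_derivative_sum, iterate_derivative_C_mul,
    Finset.smul_sum, eval_smul, Polynomial.eval_finset_sum, eval_mul, eval_C, smul_eq_mul,
    Finset.mul_sum, map_sum, ← Function.iterate_add_apply]
  simp only [map_mul, ← smul_eq_C_mul, smul_mul_assoc, mul_smul_comm, smul_smul,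
    Finset.sum_mul, mul_assoc]
  exact boxplus_key m p q hp hq _ _
end

section
/- (Finite free law of large numbers.) Let μ and C be real numbers, and let p_1, p_2, … be a sequence of monic real polynomials, each of degree m with all roots real, such that for every i the sum of the roots of p_i equals mμ and the sum of the squares of the roots of p_i is at most mC. For each positive integer n and each 1 ≤ i ≤ n let q_{i,n}(x) = n^{−m} p_i(nx), and set r_n = [q_{1,n} ⊞_m q_{2,n} ⊞_m ⋯ ⊞_m q_{n,n}]. Then r_n converges coefficientwise to (x − μ)^m as n → ∞: for each 0 ≤ j ≤ m, the coefficient of x^j in r_n converges to the coefficient of x^j in (x − μ)^m. -/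
open Polynomial Finset Filter

/-- The iterated symmetric additive convolution of a list of polynomials
(`x^m` is the identity element for `⊞_m` on monic degree-`m` polynomials). -/
noncomputable def boxplusList (m : ℕ) (l : List ℝ[X]) : ℝ[X] :=
  l.foldr (boxplus m) ((X : ℝ[X]) ^ m)

noncomputable def Tc (m : ℕ) (f : ℝ[X]) (k : ℕ) : ℝ :=
  (-1) ^ k * ((m - k).factorial : ℝ) / (m.factorial : ℝ) * f.coeff (m - k)


noncomputable def nu (f : ℝ[X]) : ℝ := ∑ i ∈ f.support, |f.coeff i|

lemma nu_nonneg (f : ℝ[X]) : 0 ≤ nu f :=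
  Finset.sum_nonneg fun _ _ => abs_nonneg _

lemma nu_eq_sum_range {f : ℝ[X]} {N : ℕ} (h : f.natDegree < N) :
    nu f = ∑ i ∈ Finset.range N, |f.coeff i| := by
  refine Finset.sum_subset (fun i hi => Finset.mem_range.2 ?_) (fun i _ hi => ?_)
  · exact lt_of_le_of_lt (le_natDegree_of_mem_supp _ hi) h
  · simp [Polynomial.notMem_support_iff.1 hi]

lemma abs_coeff_le_nu (f : ℝ[X]) (k : ℕ) : |f.coeff k| ≤ nu f := by
  by_cases h : k ∈ f.support
  · exact Finset.single_le_sum (f := fun i => |f.coeff i|) (fun i _ => abs_nonneg _) h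
  · simp only [Polynomial.notMem_support_iff.1 h, abs_zero]
    exact nu_nonneg f

lemma nu_add_le (f g : ℝ[X]) : nu (f + g) ≤ nu f + nu g := by
  set N := max (f + g).natDegree (max f.natDegree g.natDegree) + 1 with hN
  rw [nu_eq_sum_range (show (f+g).natDegree < N by omega),
    nu_eq_sum_range (show f.natDegree < N by omega),
    nu_eq_sum_range (show g.natDegree < N by omega), ← Finset.sum_add_distrib]
  exact Finset.sum_le_sum fun i _ => by rw [coeff_add]; exact abs_add_le _ _

lemma nu_mul_le (f g : ℝ[X]) : nu (f * g) ≤ nu f * nu g := by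
  set N := f.natDegree + g.natDegree + 1 with hN
  have h1 : (f * g).natDegree < N := lt_of_le_of_lt natDegree_mul_le (by omega)
  rw [nu_eq_sum_range h1, nu_eq_sum_range (show f.natDegree < N by omega),
    nu_eq_sum_range (show g.natDegree < N by omega), Finset.sum_mul_sum]
  calc ∑ k ∈ range N, |(f * g).coeff k|
      ≤ ∑ k ∈ range N, ∑ x ∈ Finset.HasAntidiagonal.antidiagonal k, |f.coeff x.1| * |g.coeff x.2| := by
        refine Finset.sum_le_sum fun k _ => ?_
        rw [coeff_mul]
        exact (Finset.abs_sum_le_sum_abs _ _).trans (le_of_eq (by simp [abs_mul]))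
    _ = ∑ x ∈ (range N).biUnion Finset.HasAntidiagonal.antidiagonal, |f.coeff x.1| * |g.coeff x.2| := by
        rw [Finset.sum_biUnion]
        intro a _ b _ hab
        simp only [Finset.disjoint_left]
        intro x hx hx'
        exact hab (by rw [← Finset.HasAntidiagonal.mem_antidiagonal.1 hx, Finset.HasAntidiagonal.mem_antidiagonal.1 hx'])
    _ ≤ ∑ i ∈ range N, ∑ j ∈ range N, |f.coeff i| * |g.coeff j| := by
        rw [← Finset.sum_product']
        refine Finset.sum_le_sum_of_subset_of_nonneg ?_ fun _ _ _ => by positivity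
        intro x hx
        obtain ⟨k, hk, hx⟩ := Finset.mem_biUnion.1 hx
        have h2 := Finset.HasAntidiagonal.mem_antidiagonal.1 hx
        simp only [Finset.mem_product, Finset.mem_range] at *
        omega

lemma Tc_boxplus {m : ℕ} {p q : ℝ[X]} (hp : p.natDegree ≤ m) {k : ℕ} (hk : k ≤ m) :
    Tc m (boxplus m p q) k = ∑ i ∈ range (k + 1), Tc m q i * Tc m p (k - i) := by
  have hfac : (m.factorial : ℝ) ≠ 0 := Nat.cast_ne_zero.2 m.factorial_ne_zero
  unfold Tc boxplus
  rw [coeff_smul, finset_sum_coeff]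
  have hsub : Finset.range (k+1) ⊆ Finset.range (m+1) := by
    apply Finset.range_subset_range.2; omega
  rw [← Finset.sum_subset hsub]; swap
  · intro i hi hi'
    simp only [Finset.mem_range] at hi hi'
    have : p.coeff (m - k + i) = 0 := by
      apply coeff_eq_zero_of_natDegree_lt; omega
    rw [coeff_C_mul, Polynomial.coeff_iterate_derivative, this]
    simp
  rw [smul_eq_mul, Finset.mul_sum, Finset.mul_sum]
  refine Finset.sum_congr rfl fun i hi => ?_
  have hik : i ≤ k := by simpa [Nat.lt_succ_iff] using hi
  rw [coeff_C_mul, Polynomial.coeff_iterate_derivative, ← coeff_zero_eq_eval_zero,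
    Polynomial.coeff_iterate_derivative]
  have h1 : m - (k - i) = m - k + i := by omega
  have h2 : (0 + (m - i)).descFactorial (m - i) = (m-i).factorial := by
    rw [Nat.zero_add, Nat.descFactorial_self]
  have h3 : ((m - k).factorial : ℝ) * ((m - k + i).descFactorial i : ℝ)
      = ((m - k + i).factorial : ℝ) := by
    have h := Nat.factorial_mul_descFactorial (show i ≤ m - k + i by omega)
    rw [show m - k + i - i = m - k from by omega] at h
    exact_mod_cast h
  rw [h1, h2]
  push_cast [nsmul_eq_mul]
  have h4 : ((-1 : ℝ)) ^ i * (-1 : ℝ) ^ (k - i) = (-1) ^ k := by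
    rw [← pow_add]; congr 1; omega
  rw [← h4, ← h3]
  ring_nf
noncomputable def Phi (m : ℕ) (f : ℝ[X]) : ℝ[X] :=
  ∑ j ∈ Finset.range (m + 1), C (Tc m f j) * X ^ j

lemma Phi_coeff {m : ℕ} (f : ℝ[X]) {j : ℕ} (hj : j ≤ m) : (Phi m f).coeff j = Tc m f j := by
  unfold Phi
  rw [finset_sum_coeff]
  simp only [coeff_C_mul, coeff_X_pow, mul_ite, mul_one, mul_zero]
  rw [Finset.sum_ite_eq (Finset.range (m+1)) j (fun j => Tc m f j)]
  simp [Nat.lt_succ_iff, hj]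

lemma Phi_natDegree (m : ℕ) (f : ℝ[X]) : (Phi m f).natDegree ≤ m := by
  refine natDegree_sum_le_of_forall_le _ _ fun j hj => ?_
  refine (natDegree_C_mul_le _ _).trans ?_
  simpa [Nat.lt_succ_iff] using Finset.mem_range.1 hj

lemma boxplus_natDegree {m : ℕ} (p q : ℝ[X]) (hp : p.natDegree ≤ m) :
    (boxplus m p q).natDegree ≤ m := by
  refine (natDegree_smul_le _ _).trans ?_
  refine natDegree_sum_le_of_forall_le _ _ fun j hj => ?_
  refine (natDegree_C_mul_le _ _).trans ?_
  exact (natDegree_iterate_derivative _ _).trans (by omega)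

lemma boxplusList_natDegree {m : ℕ} (l : List ℝ[X]) (hl : ∀ f ∈ l, f.natDegree ≤ m) :
    (boxplusList m l).natDegree ≤ m := by
  induction l with
  | nil => simpa [boxplusList] using natDegree_X_pow_le m
  | cons f t ih => exact boxplus_natDegree _ _ (hl f (List.mem_cons_self))

lemma Tc_boxplusList {m : ℕ} (l : List ℝ[X]) (hl : ∀ f ∈ l, f.natDegree ≤ m)
    {k : ℕ} (hk : k ≤ m) :
    Tc m (boxplusList m l) k = ((l.map (Phi m)).prod).coeff k := by
  induction l generalizing k with
  | nil =>
      simp only [boxplusList, List.foldr_nil, List.map_nil, List.prod_nil]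
      rcases Nat.eq_zero_or_pos k with rfl | hk0
      · simp [Tc, coeff_X_pow, coeff_one,
          div_self (Nat.cast_ne_zero.2 m.factorial_ne_zero : (m.factorial:ℝ) ≠ 0)]
      · have h5 : ¬ (m - k = m) := by omega
        have h6 : k ≠ 0 := by omega
        simp [Tc, coeff_X_pow, h5, coeff_one, h6]
  | cons f t ih =>
      have hf : f.natDegree ≤ m := hl f (List.mem_cons_self)
      have ht : ∀ g ∈ t, g.natDegree ≤ m := fun g hg => hl g (List.mem_cons_of_mem f hg)
      have : boxplusList m (f :: t) = boxplus m f (boxplusList m t) := rfl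
      rw [this, Tc_boxplus hf hk, List.map_cons, List.prod_cons, mul_comm, coeff_mul,
        Finset.Nat.sum_antidiagonal_eq_sum_range_succ_mk]
      refine Finset.sum_congr rfl fun i hi => ?_
      have hik : i ≤ k := by simpa [Nat.lt_succ_iff] using hi
      dsimp only
      rw [ih ht (hik.trans hk), Phi_coeff f (by omega : k - i ≤ m)]
lemma coeff_comp_C_mul_X (p : ℝ[X]) (a : ℝ) (k : ℕ) :
    (p.comp (C a * X)).coeff k = p.coeff k * a ^ k := by
  rw [comp_eq_sum_left, Polynomial.sum_def, finset_sum_coeff]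
  have : ∀ i ∈ p.support, (C (p.coeff i) * (C a * X) ^ i).coeff k
      = if i = k then p.coeff i * a ^ i else 0 := by
    intro i _
    rw [mul_pow, ← C_pow, ← mul_assoc, ← C_mul, coeff_C_mul, coeff_X_pow]
    simp [mul_comm, eq_comm]
  rw [Finset.sum_congr rfl this, Finset.sum_ite_eq' p.support k
    (fun i => p.coeff i * a ^ i)]
  by_cases h : k ∈ p.support
  · simp [h]
  · simp [h, Polynomial.notMem_support_iff.1 h]

lemma nu_one : nu (1 : ℝ[X]) = 1 := by
  rw [nu_eq_sum_range (show (1:ℝ[X]).natDegree < 1 by simp)]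
  simp

lemma nu_X_sub_C (r : ℝ) : nu (X - C r) ≤ 1 + |r| := by
  rw [nu_eq_sum_range (show (X - C r).natDegree < 2 by
    have := natDegree_X_sub_C r; omega)]
  rw [Finset.sum_range_succ, Finset.sum_range_one]
  simp [coeff_sub, abs_neg]
  rw [add_comm]

lemma nu_multiset_prod_le (s : Multiset ℝ) {B : ℝ} (hB : 0 ≤ B)
    (h : ∀ r ∈ s, |r| ≤ B) :
    nu ((s.map fun r => X - C r).prod) ≤ (1 + B) ^ Multiset.card s := by
  induction s using Multiset.induction with
  | empty => simp [nu_one]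
  | cons r t ih =>
      rw [Multiset.map_cons, Multiset.prod_cons, Multiset.card_cons, pow_succ']
      refine (nu_mul_le _ _).trans ?_
      have h1 : nu (X - C r) ≤ 1 + B :=
        (nu_X_sub_C r).trans (by linarith [h r (Multiset.mem_cons_self r t)])
      have h2 : nu ((t.map fun r => X - C r).prod) ≤ (1 + B) ^ Multiset.card t :=
        ih fun x hx => h x (Multiset.mem_cons_of_mem hx)
      exact mul_le_mul h1 h2 (nu_nonneg _) (by linarith)

/-- Uniform coefficient bound for monic real-rooted polys with bounded root square sums. -/
lemma coeff_bound {m : ℕ} {Cbd : ℝ} {f : ℝ[X]} (hmon : f.Monic) (hdeg : f.natDegree = m)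
    (hreal : Multiset.card f.roots = m)
    (hsq : (f.roots.map fun r => r ^ 2).sum ≤ m * Cbd) (j : ℕ) :
    |f.coeff j| ≤ (1 + Real.sqrt (m * Cbd)) ^ m := by
  have hsplit : Splits f := splits_iff_card_roots.2 (by rw [hreal, hdeg])
  have hroots : ∀ r ∈ f.roots, |r| ≤ Real.sqrt (m * Cbd) := by
    intro r hr
    have h1 : r ^ 2 ≤ (f.roots.map fun r => r ^ 2).sum := by
      refine Multiset.single_le_sum (fun x hx => ?_) _ (Multiset.mem_map_of_mem _ hr)
      obtain ⟨y, _, rfl⟩ := Multiset.mem_map.1 hx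
      positivity
    have h2 : r ^ 2 ≤ m * Cbd := h1.trans hsq
    have h3 : |r| = Real.sqrt (r ^ 2) := (Real.sqrt_sq_eq_abs r).symm
    rw [h3]
    exact Real.sqrt_le_sqrt h2
  have hrepr : f = (f.roots.map fun r => X - C r).prod :=
    hsplit.eq_prod_roots_of_monic hmon
  calc |f.coeff j| ≤ nu f := abs_coeff_le_nu f j
    _ = nu ((f.roots.map fun r => X - C r).prod) := by rw [← hrepr]
    _ ≤ (1 + Real.sqrt (m * Cbd)) ^ Multiset.card f.roots :=
        nu_multiset_prod_le _ (Real.sqrt_nonneg _) hroots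
    _ = _ := by rw [hreal]
lemma nu_sub_le (f g : ℝ[X]) : nu (f - g) ≤ nu f + nu g := by
  have h1 : nu (-g) = nu g := by unfold nu; simp
  have := nu_add_le f (-g)
  rwa [← sub_eq_add_neg, h1] at this

lemma nu_prod_le (g : ℕ → ℝ[X]) {b : ℝ} (hb : 0 ≤ b)
    (hg : ∀ i, nu (g i) ≤ b) (n : ℕ) :
    nu (((List.range n).map g).prod) ≤ b ^ n := by
  induction n with
  | zero => simp [nu_one]
  | succ n ih =>
      rw [List.range_succ, List.map_append, List.prod_append]
      simp only [List.map_cons, List.map_nil, List.prod_cons, List.prod_nil, mul_one, pow_succ]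
      exact (nu_mul_le _ _).trans (mul_le_mul ih (hg n) (nu_nonneg _) (by positivity))

lemma prod_close (L : ℝ[X]) (g : ℕ → ℝ[X]) {a e : ℝ} (ha : 0 ≤ a) (he : 0 ≤ e)
    (hL : nu L ≤ a) (hg : ∀ i, nu (g i - L) ≤ e) (n : ℕ) :
    nu (((List.range n).map g).prod - L ^ n) ≤ n * e * (a + e) ^ (n - 1) := by
  have hgb : ∀ i, nu (g i) ≤ a + e := by
    intro i
    calc nu (g i) = nu (g i - L + L) := by ring_nf
      _ ≤ nu (g i - L) + nu L := nu_add_le _ _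
      _ ≤ a + e := by linarith [hg i, hL]
  induction n with
  | zero => simp [nu]
  | succ n ih =>
      rw [List.range_succ, List.map_append, List.prod_append]
      simp only [List.map_cons, List.map_nil, List.prod_cons, List.prod_nil, mul_one]
      set P := ((List.range n).map g).prod with hP
      have key : P * g n - L ^ (n + 1) = P * (g n - L) + (P - L ^ n) * L := by ring
      rw [key]
      have h1 : nu (P * (g n - L)) ≤ (a + e) ^ n * e :=
        (nu_mul_le _ _).trans
          (mul_le_mul (nu_prod_le g (by linarith) hgb n) (hg n) (nu_nonneg _) (by positivity))
      have h2 : nu ((P - L ^ n) * L) ≤ (n * e * (a + e) ^ (n - 1)) * a :=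
        (nu_mul_le _ _).trans
          (mul_le_mul ih hL (nu_nonneg _) (by positivity))
      refine (nu_add_le _ _).trans ?_
      have h3 : (n : ℝ) * e * (a + e) ^ (n - 1) * a ≤ n * e * (a + e) ^ n := by
        rcases Nat.eq_zero_or_pos n with rfl | hn
        · simp
        · have h4 : (a + e) ^ (n - 1) * a ≤ (a + e) ^ n := by
            calc (a + e) ^ (n - 1) * a ≤ (a + e) ^ (n - 1) * (a + e) :=
                  mul_le_mul_of_nonneg_left (by linarith) (by positivity)
              _ = (a + e) ^ n := by rw [← pow_succ]; congr 1; omega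
          calc (n : ℝ) * e * (a + e) ^ (n - 1) * a = (n * e) * ((a + e) ^ (n - 1) * a) := by ring
            _ ≤ (n * e) * (a + e) ^ n := mul_le_mul_of_nonneg_left h4 (by positivity)
            _ = n * e * (a + e) ^ n := by ring
      push_cast
      have h7 : ((n : ℝ) + 1) * e * (a + e) ^ n = n * e * (a+e)^n + e * (a+e)^n := by ring
      rw [h7]
      linarith [h1, h2, h3]

lemma coeff_one_add_C_mul_X_pow (a : ℝ) (n k : ℕ) :
    ((1 + C a * X) ^ n).coeff k = (n.choose k : ℝ) * a ^ k := by
  rw [add_comm, add_pow, finset_sum_coeff]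
  have : ∀ i ∈ Finset.range (n + 1),
      ((C a * X) ^ i * 1 ^ (n - i) * (n.choose i : ℝ[X])).coeff k
        = if i = k then (n.choose i : ℝ) * a ^ i else 0 := by
    intro i _
    rw [one_pow, mul_one, mul_pow, ← C_pow, ← C_eq_natCast, coeff_mul_C, coeff_C_mul, coeff_X_pow]
    simp [eq_comm, mul_comm]
  rw [Finset.sum_congr rfl this, Finset.sum_ite_eq' (Finset.range (n+1)) k
    (fun i => (n.choose i : ℝ) * a ^ i)]
  by_cases h : k ∈ Finset.range (n + 1)
  · simp [h]
  · have : n.choose k = 0 := Nat.choose_eq_zero_of_lt (by simpa [Nat.lt_succ_iff] using h)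
    simp [h, this]

lemma tendsto_choose_mul_div_pow (k : ℕ) (c : ℝ) :
    Tendsto (fun n : ℕ => (n.choose k : ℝ) * (c / n) ^ k) atTop
      (nhds (c ^ k / (k.factorial : ℝ))) := by
  rcases Nat.eq_zero_or_pos k with rfl | hk
  · simpa using tendsto_const_nhds
  have key : ∀ n : ℕ, n ≥ k →
      (n.choose k : ℝ) * (c / n) ^ k
        = c ^ k / (k.factorial : ℝ) * ∏ i ∈ Finset.range k, (1 - (i : ℝ) / n) := by
    intro n hn
    have hn0 : (n : ℝ) ≠ 0 := Nat.cast_ne_zero.2 (by omega)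
    have h1 : ((n.descFactorial k : ℕ) : ℝ) = ∏ i ∈ Finset.range k, ((n : ℝ) - i) := by
      rw [Nat.descFactorial_eq_prod_range, Nat.cast_prod]
      refine Finset.prod_congr rfl fun i hi => ?_
      have := Finset.mem_range.1 hi
      push_cast [Nat.cast_sub (by omega : i ≤ n)]
      ring
    have h2 : ((k.factorial : ℕ) : ℝ) * (n.choose k : ℝ) = ∏ i ∈ Finset.range k, ((n : ℝ) - i) := by
      rw [← h1, ← Nat.cast_mul, Nat.descFactorial_eq_factorial_mul_choose]
    have h3 : ∀ i ∈ Finset.range k, (1 - (i : ℝ) / n) = ((n : ℝ) - i) / n := by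
      intro i _; field_simp
    have hkf : ((k.factorial : ℕ) : ℝ) ≠ 0 := Nat.cast_ne_zero.2 k.factorial_ne_zero
    have hnk : ((n : ℝ)) ^ k ≠ 0 := pow_ne_zero k hn0
    rw [Finset.prod_congr rfl h3, Finset.prod_div_distrib, Finset.prod_const, Finset.card_range, ← h2, div_pow]
    field_simp
  have hprod : Tendsto (fun n : ℕ => ∏ i ∈ Finset.range k, (1 - (i : ℝ) / n)) atTop (nhds 1) := by
    have h8 : Tendsto (fun n : ℕ => ∏ i ∈ Finset.range k, (1 - (i : ℝ) / n)) atTop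
        (nhds (∏ i ∈ Finset.range k, 1)) := by
      refine tendsto_finset_prod _ fun i _ => ?_
      simpa using tendsto_const_nhds.sub (tendsto_const_div_atTop_nhds_zero_nat (i : ℝ))
    simpa using h8
  have hmain : Tendsto (fun n : ℕ => c ^ k / (k.factorial : ℝ)
      * ∏ i ∈ Finset.range k, (1 - (i : ℝ) / n)) atTop (nhds (c ^ k / (k.factorial : ℝ))) := by
    simpa using (tendsto_const_nhds (x := c ^ k / (k.factorial : ℝ))).mul hprod
  refine hmain.congr' ?_
  filter_upwards [eventually_ge_atTop k] with n hn
  exact (key n hn).symm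

lemma err_tendsto (EE K : ℝ) (hK : 0 ≤ K) :
    Tendsto (fun n : ℕ => EE / n * (1 + K / n) ^ (n - 1)) atTop (nhds 0) := by
  have h1 : Tendsto (fun n : ℕ => (1 + K / n) ^ n) atTop (nhds (Real.exp K)) :=
    Real.tendsto_one_add_div_pow_exp K
  have h2 : Tendsto (fun n : ℕ => (1 + K / n)) atTop (nhds 1) := by
    simpa using tendsto_const_nhds.add (tendsto_const_div_atTop_nhds_zero_nat K)
  have h3 : Tendsto (fun n : ℕ => (1 + K / n) ^ n / (1 + K / n)) atTop
      (nhds (Real.exp K)) := by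
    have := h1.div h2 one_ne_zero; rw [div_one] at this; exact this
  have h4 : Tendsto (fun n : ℕ => (1 + K / n) ^ (n - 1)) atTop (nhds (Real.exp K)) := by
    refine Tendsto.congr' ?_ h3
    filter_upwards [eventually_ge_atTop 1] with n hn
    have hb : (1 + K / n) ≠ 0 := by
      have : 0 < (n : ℝ) := by exact_mod_cast hn
      positivity
    rw [eq_comm, pow_sub₀ _ hb hn, pow_one]
    ring
  have h5 : Tendsto (fun n : ℕ => EE / n) atTop (nhds 0) :=
    tendsto_const_div_atTop_nhds_zero_nat EE
  simpa using h5.mul h4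
lemma aux_main (m : ℕ) (hm : 1 ≤ m) (μ Cbd : ℝ) (p : ℕ → ℝ[X])
    (hmon : ∀ i, (p i).Monic) (hdeg : ∀ i, (p i).natDegree = m)
    (hreal : ∀ i, Multiset.card (p i).roots = m)
    (hsum : ∀ i, (p i).roots.sum = m * μ)
    (hsq : ∀ i, ((p i).roots.map fun r => r ^ 2).sum ≤ m * Cbd)
    (kk : ℕ) (hkk : kk ≤ m) :
    Filter.Tendsto (fun n : ℕ =>
      Tc m (boxplusList m ((List.range n).map fun i =>
        C (((n : ℝ) ^ m)⁻¹) * ((p (i + 1)).comp (C (n : ℝ) * X)))) kk)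
      Filter.atTop (nhds (μ ^ kk / (kk.factorial : ℝ))) := by
  have hfac : (m.factorial : ℝ) ≠ 0 := Nat.cast_ne_zero.2 m.factorial_ne_zero
  set D := (1 + Real.sqrt (m * Cbd)) ^ m with hD
  have hD0 : 0 ≤ D := by positivity
  have hDb : ∀ i t, |(p i).coeff t| ≤ D := fun i t =>
    coeff_bound (hmon i) (hdeg i) (hreal i) (hsq i) t
  set EE := ((m : ℝ) + 1) * D with hEE
  have hEE0 : 0 ≤ EE := by positivity
  set K := |μ| + EE with hK
  have hK0 : 0 ≤ K := by positivity
  set qf : ℕ → ℕ → ℝ[X] := fun n i =>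
    C (((n : ℝ) ^ m)⁻¹) * ((p (i + 1)).comp (C (n : ℝ) * X)) with hqf
  set Ln : ℕ → ℝ[X] := fun n => 1 + C (μ / (n : ℝ)) * X with hLn
  -- coefficients of the rescaled polynomials
  have hqc : ∀ n i t : ℕ, (qf n i).coeff t
      = ((n : ℝ) ^ m)⁻¹ * ((p (i + 1)).coeff t * (n : ℝ) ^ t) := by
    intro n i t
    rw [hqf]
    rw [coeff_C_mul, coeff_comp_C_mul_X]
  have hqdeg : ∀ n i, (qf n i).natDegree ≤ m := by
    intro n i
    rw [hqf]
    refine (natDegree_C_mul_le _ _).trans (natDegree_comp_le.trans ?_)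
    rw [hdeg]
    calc m * (C (n : ℝ) * X).natDegree ≤ m * 1 :=
          Nat.mul_le_mul_left m ((natDegree_C_mul_le _ _).trans natDegree_X_le)
      _ = m := mul_one m
  have hTcP : ∀ n : ℕ, Tc m (boxplusList m ((List.range n).map (qf n))) kk
      = (((List.range n).map (Phi m ∘ qf n)).prod).coeff kk := by
    intro n
    rw [Tc_boxplusList _ (fun f hf => ?_) hkk, List.map_map]
    obtain ⟨i, _, rfl⟩ := List.mem_map.1 hf
    exact hqdeg n i
  have hTcq : ∀ n : ℕ, 1 ≤ n → ∀ i t : ℕ, t ≤ m → Tc m (qf n i) t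
      = (-1) ^ t * (((m - t).factorial : ℝ) / (m.factorial : ℝ))
          * ((p (i + 1)).coeff (m - t)) / (n : ℝ) ^ t := by
    intro n hn i t ht
    have hnR : (0 : ℝ) < n := by exact_mod_cast hn
    unfold Tc
    rw [hqc n i (m - t)]
    have hsplit : ((n : ℝ)) ^ m = (n : ℝ) ^ (m - t) * (n : ℝ) ^ t := by
      rw [← pow_add]; congr 1; omega
    rw [hsplit]
    field_simp
  -- coefficient facts about `p`
  have hcoeffm : ∀ i, (p i).coeff m = 1 := by
    intro i; have := Monic.coeff_natDegree (hmon i); rwa [hdeg i] at this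
  have hcoeffm1 : ∀ i, (p i).coeff (m - 1) = -((m : ℝ) * μ) := by
    intro i
    have hsplits : Splits (p i) :=
      splits_iff_card_roots.2 (by rw [hreal i, hdeg i])
    have h1 := hsplits.nextCoeff_eq_neg_sum_roots_of_monic (hmon i)
    rw [nextCoeff_of_natDegree_pos (by rw [hdeg i]; omega), hdeg i] at h1
    rw [h1, hsum i]
  -- facts about the linear approximation
  have hLdeg : ∀ n : ℕ, (Ln n).natDegree ≤ 1 := by
    intro n
    rw [hLn]
    exact (natDegree_add_le _ _).trans
      (max_le (by simp) ((natDegree_C_mul_le _ _).trans natDegree_X_le))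
  have hLcoeff0 : ∀ n : ℕ, (Ln n).coeff 0 = 1 := by intro n; rw [hLn]; simp
  have hLcoeff1 : ∀ n : ℕ, (Ln n).coeff 1 = μ / n := by
    intro n; rw [hLn]; simp [coeff_one]
  have hLcoeffge : ∀ n t : ℕ, 2 ≤ t → (Ln n).coeff t = 0 := by
    intro n t ht
    rw [hLn]
    simp only [coeff_add, coeff_one, coeff_C_mul, coeff_X]
    rw [if_neg (by omega), if_neg (by omega)]
    simp
  have hLnu : ∀ n : ℕ, 1 ≤ n → nu (Ln n) ≤ 1 + |μ| / n := by
    intro n hn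
    have hnR : (0 : ℝ) < n := by exact_mod_cast hn
    rw [nu_eq_sum_range (show (Ln n).natDegree < 2 by have := hLdeg n; omega),
      Finset.sum_range_succ, Finset.sum_range_one, hLcoeff0, hLcoeff1,
      abs_one, abs_div, abs_of_pos hnR]
  -- the key perturbation bound
  have hEbound : ∀ n : ℕ, 1 ≤ n → ∀ i, nu (Phi m (qf n i) - Ln n) ≤ EE / (n : ℝ) ^ 2 := by
    intro n hn i
    have hnR : (0 : ℝ) < n := by exact_mod_cast hn
    have hn1 : (1 : ℝ) ≤ n := by exact_mod_cast hn
    have hdd : (Phi m (qf n i) - Ln n).natDegree < m + 1 := by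
      have h1 := Phi_natDegree m (qf n i)
      have h2 := hLdeg n
      have h3 := natDegree_sub_le (Phi m (qf n i)) (Ln n)
      omega
    rw [nu_eq_sum_range hdd]
    have hterm : ∀ t ∈ Finset.range (m + 1),
        |(Phi m (qf n i) - Ln n).coeff t| ≤ D / (n : ℝ) ^ 2 := by
      intro t ht
      have htm : t ≤ m := by simpa [Nat.lt_succ_iff] using Finset.mem_range.1 ht
      rw [coeff_sub, Phi_coeff _ htm, hTcq n hn i t htm]
      match t, htm with
      | 0, htm =>
          rw [Nat.sub_zero, hcoeffm, hLcoeff0]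
          have hval : ((-1 : ℝ)) ^ 0 * ((m.factorial : ℝ) / (m.factorial : ℝ)) * 1
              / (n : ℝ) ^ 0 = 1 := by field_simp
          rw [hval]
          simp only [sub_self, abs_zero]
          positivity
      | 1, htm =>
          rw [hcoeffm1, hLcoeff1]
          have hmf : (m : ℝ) * (((m - 1).factorial : ℕ) : ℝ) = (m.factorial : ℝ) := by
            exact_mod_cast Nat.mul_factorial_pred (by omega)
          have hval : (-1 : ℝ) ^ 1 * (((m - 1).factorial : ℝ) / (m.factorial : ℝ))
              * (-((m : ℝ) * μ)) / (n : ℝ) ^ 1 = μ / n := by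
            field_simp
            linear_combination μ * hmf
          rw [hval]
          simp only [sub_self, abs_zero]
          positivity
      | (t2 + 2), htm =>
          rw [hLcoeffge n (t2 + 2) (by omega), sub_zero]
          set t := t2 + 2 with hts
          have e1 : |(-1 : ℝ) ^ t * (((m - t).factorial : ℝ) / (m.factorial : ℝ))
                * ((p (i + 1)).coeff (m - t)) / (n : ℝ) ^ t|
              = (((m - t).factorial : ℝ) / (m.factorial : ℝ))
                * |(p (i + 1)).coeff (m - t)| / (n : ℝ) ^ t := by
            rw [abs_div, abs_mul, abs_mul, abs_pow, abs_neg, abs_one, one_pow, one_mul,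
              abs_of_nonneg (by positivity : (0 : ℝ) ≤ ((m - t).factorial : ℝ) / (m.factorial : ℝ)),
              abs_of_nonneg (by positivity : (0 : ℝ) ≤ (n : ℝ) ^ t)]
          rw [e1]
          have e2 : (((m - t).factorial : ℝ) / (m.factorial : ℝ)) ≤ 1 := by
            rw [div_le_one (by positivity)]
            exact_mod_cast Nat.factorial_le (Nat.sub_le m t)
          have e3 : (((m - t).factorial : ℝ) / (m.factorial : ℝ))
              * |(p (i + 1)).coeff (m - t)| ≤ D := by
            calc (((m - t).factorial : ℝ) / (m.factorial : ℝ)) * |(p (i + 1)).coeff (m - t)|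
                ≤ 1 * D := mul_le_mul e2 (hDb (i + 1) (m - t)) (abs_nonneg _) zero_le_one
              _ = D := one_mul D
          have e4 : (n : ℝ) ^ 2 ≤ (n : ℝ) ^ t := pow_le_pow_right₀ hn1 (by omega)
          exact div_le_div₀ hD0 e3 (by positivity) e4
    calc ∑ t ∈ Finset.range (m + 1), |(Phi m (qf n i) - Ln n).coeff t|
        ≤ ∑ _t ∈ Finset.range (m + 1), D / (n : ℝ) ^ 2 := Finset.sum_le_sum hterm
      _ = ((m : ℝ) + 1) * (D / (n : ℝ) ^ 2) := by
          rw [Finset.sum_const, Finset.card_range, nsmul_eq_mul]; push_cast; ring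
      _ = EE / (n : ℝ) ^ 2 := by rw [hEE]; ring
  -- limit of the main term
  have hP1 : Filter.Tendsto (fun n : ℕ => ((Ln n) ^ n).coeff kk) Filter.atTop
      (nhds (μ ^ kk / (kk.factorial : ℝ))) := by
    refine (tendsto_choose_mul_div_pow kk μ).congr fun n => ?_
    rw [hLn]
    exact (coeff_one_add_C_mul_X_pow (μ / n) n kk).symm
  -- the error term tends to zero
  have hP2 : Filter.Tendsto (fun n : ℕ =>
      (((List.range n).map (Phi m ∘ qf n)).prod).coeff kk - ((Ln n) ^ n).coeff kk)
      Filter.atTop (nhds 0) := by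
    apply squeeze_zero_norm' (a := fun n : ℕ => EE / n * (1 + K / n) ^ (n - 1))
    · filter_upwards [eventually_ge_atTop 1] with n hn
      have hnR : (0 : ℝ) < n := by exact_mod_cast hn
      have hn1 : (1 : ℝ) ≤ n := by exact_mod_cast hn
      have hdiff := prod_close (Ln n) (Phi m ∘ qf n) (a := 1 + |μ| / n) (e := EE / (n : ℝ) ^ 2)
        (by positivity) (by positivity) (hLnu n hn) (fun i => hEbound n hn i) n
      have hstep : (n : ℝ) * (EE / (n : ℝ) ^ 2) * ((1 + |μ| / n) + EE / (n : ℝ) ^ 2) ^ (n - 1)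
          ≤ EE / n * (1 + K / n) ^ (n - 1) := by
        have e1 : (n : ℝ) * (EE / (n : ℝ) ^ 2) = EE / n := by field_simp
        have e2 : (1 + |μ| / n) + EE / (n : ℝ) ^ 2 ≤ 1 + K / n := by
          have e3 : EE / (n : ℝ) ^ 2 ≤ EE / n := by
            apply div_le_div₀ hEE0 le_rfl hnR
            nlinarith
          rw [hK, add_div]
          linarith
        rw [e1]
        exact mul_le_mul_of_nonneg_left
          (pow_le_pow_left₀ (by positivity) e2 (n - 1)) (by positivity)
      calc ‖(((List.range n).map (Phi m ∘ qf n)).prod).coeff kk - ((Ln n) ^ n).coeff kk‖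
          = |(((List.range n).map (Phi m ∘ qf n)).prod - (Ln n) ^ n).coeff kk| := by
            rw [Real.norm_eq_abs, coeff_sub]
        _ ≤ nu (((List.range n).map (Phi m ∘ qf n)).prod - (Ln n) ^ n) := abs_coeff_le_nu _ _
        _ ≤ (n : ℝ) * (EE / (n : ℝ) ^ 2) * ((1 + |μ| / n) + EE / (n : ℝ) ^ 2) ^ (n - 1) := hdiff
        _ ≤ EE / n * (1 + K / n) ^ (n - 1) := hstep
    · exact err_tendsto EE K hK0
  -- combine
  have hsum' := hP1.add hP2
  rw [add_zero] at hsum'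
  refine Filter.Tendsto.congr (fun n => ?_) hsum'
  rw [hTcP n]
  ring
/-- **Finite free law of large numbers.** Let `p_1, p_2, …` be monic real-rooted real
polynomials of degree `m` whose roots sum to `mμ` and whose roots have sum of squares at
most `mC`. With `q_{i,n}(x) = n^{-m} p_i(n x)` and
`r_n = [q_{1,n} ⊞_m ⋯ ⊞_m q_{n,n}]`, each coefficient of `r_n` converges to the
corresponding coefficient of `(x - μ)^m`. -/
theorem finite_free_law_of_large_numbers (m : ℕ) (μ Cbd : ℝ) (p : ℕ → ℝ[X])
    (hmon : ∀ i, (p i).Monic) (hdeg : ∀ i, (p i).natDegree = m)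
    (hreal : ∀ i, Multiset.card (p i).roots = m)
    (hsum : ∀ i, (p i).roots.sum = m * μ)
    (hsq : ∀ i, ((p i).roots.map fun r => r ^ 2).sum ≤ m * Cbd) :
    ∀ j : ℕ, j ≤ m →
      Filter.Tendsto
        (fun n : ℕ =>
          (boxplusList m
            ((List.range n).map fun i =>
              C (((n : ℝ) ^ m)⁻¹) *
                ((p (i + 1)).comp (C (n : ℝ) * X)))).coeff j)
        Filter.atTop
        (nhds ((((X : ℝ[X]) - C μ) ^ m).coeff j)) := by
  intro j hj
  rcases Nat.eq_zero_or_pos m with rfl | hm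
  · -- degenerate case `m = 0`
    have hj0 : j = 0 := Nat.le_zero.1 hj
    subst hj0
    have hone : ∀ n i : ℕ, C (((n : ℝ) ^ 0)⁻¹) * ((p (i + 1)).comp (C (n : ℝ) * X)) = 1 := by
      intro n i
      have hp1 : p (i + 1) = 1 :=
        (Polynomial.Monic.natDegree_eq_zero (hmon (i + 1))).1 (hdeg (i + 1))
      rw [hp1]
      simp
    have hlist : ∀ l : List ℝ[X], (∀ f ∈ l, f = 1) → boxplusList 0 l = 1 := by
      intro l hl
      induction l with
      | nil => simp [boxplusList]
      | cons f t ih =>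
          have h1 : boxplusList 0 (f :: t) = boxplus 0 f (boxplusList 0 t) := rfl
          rw [h1, hl f (List.mem_cons_self),
            ih fun g hg => hl g (List.mem_cons_of_mem f hg)]
          simp [boxplus]
    have heq : ∀ n : ℕ, (boxplusList 0 ((List.range n).map fun i =>
        C (((n : ℝ) ^ 0)⁻¹) * ((p (i + 1)).comp (C (n : ℝ) * X)))).coeff 0 = 1 := by
      intro n
      rw [hlist _ (by
        intro f hf
        obtain ⟨i, _, rfl⟩ := List.mem_map.1 hf
        exact hone n i)]
      simp
    have hfn : (fun n : ℕ => (boxplusList 0 ((List.range n).map fun i =>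
        C (((n : ℝ) ^ 0)⁻¹) * ((p (i + 1)).comp (C (n : ℝ) * X)))).coeff 0)
          = fun _ : ℕ => (1 : ℝ) := funext heq
    rw [hfn, pow_zero, coeff_one, if_pos rfl]
    exact tendsto_const_nhds
  · -- main case `1 ≤ m`
    have hkk : m - j ≤ m := Nat.sub_le m j
    have htend := aux_main m hm μ Cbd p hmon hdeg hreal hsum hsq (m - j) hkk
    set c : ℝ := (-1 : ℝ) ^ (m - j) * ((m.factorial : ℝ) / (j.factorial : ℝ)) with hc
    have hjf : ((j.factorial : ℕ) : ℝ) ≠ 0 := Nat.cast_ne_zero.2 j.factorial_ne_zero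
    have hmf : ((m.factorial : ℕ) : ℝ) ≠ 0 := Nat.cast_ne_zero.2 m.factorial_ne_zero
    have hs : ((-1 : ℝ)) ^ (m - j) * (-1 : ℝ) ^ (m - j) = 1 := by
      rw [← pow_add]; exact Even.neg_one_pow ⟨m - j, rfl⟩
    have hcoeff : ∀ f : ℝ[X], c * Tc m f (m - j) = f.coeff j := by
      intro f
      unfold Tc
      rw [show m - (m - j) = j from by omega, hc]
      field_simp
      linear_combination (f.coeff j) * hs
    have hlim : (((X : ℝ[X]) - C μ) ^ m).coeff j = c * (μ ^ (m - j) / ((m - j).factorial : ℝ)) := by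
      rw [sub_eq_add_neg, ← C_neg, coeff_X_add_C_pow, Nat.cast_choose ℝ hj, neg_pow, hc]
      have hmjf : (((m - j).factorial : ℕ) : ℝ) ≠ 0 := Nat.cast_ne_zero.2 (m - j).factorial_ne_zero
      field_simp
    rw [hlim]
    exact (htend.const_mul c).congr fun n => hcoeff _
end

section
/- (Finite free Poisson limit theorem.) Let m and k be positive integers and let p(x) = x^{m−1}(x − 1). Then the k-fold symmetric additive convolution of p with itself satisfies [p ⊞_m p ⊞_m ⋯ ⊞_m p] (k copies of p) = m!·(−m)^{−m} · ∑_{i=0}^m ((−mx)^i / i!) · C(k, m−i), i.e., it equals m!(−m)^{−m} L_m^{(k−m)}(mx), where L_n^{(α)}(x) = ∑_{i=0}^n ((−x)^i / i!) C(n+α, n−i) is the associated Laguerre polynomial and C(a,b) the binomial coefficient (with C(k, m−i) = 0 when m−i > k). -/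
open Polynomial

/-- The `k`-fold iterated symmetric additive convolution of `p` with itself
(`x^m` is the identity element for `⊞_m` on monic degree-`m` polynomials, so folding
`k` copies of `p` over `x^m` gives exactly the `k`-fold convolution). -/
noncomputable def boxplusPow (m k : ℕ) (p : ℝ[X]) : ℝ[X] :=
  (List.replicate k p).foldr (boxplus m) ((X : ℝ[X]) ^ m)

/-- auxiliary coefficient function -/
noncomputable def gco (m k i : ℕ) : ℝ :=
  (m.factorial : ℝ) * ((-(m : ℝ)) ^ m)⁻¹ * (k.choose (m - i)) * (-(m : ℝ)) ^ i / (i.factorial : ℝ)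

lemma deriv_eval_aux (m k j : ℕ) (hj : j ≤ m) :
    (Polynomial.derivative^[j] (∑ i ∈ Finset.range (m + 1), C (gco m k i) * X ^ i)).eval 0
      = (j.factorial : ℝ) * gco m k j := by
  rw [Polynomial.iterate_derivative_sum, Polynomial.eval_finset_sum, Finset.sum_eq_single j]
  · rw [Polynomial.iterate_derivative_C_mul, Polynomial.iterate_derivative_X_pow_eq_C_mul,
      Nat.sub_self, pow_zero, mul_one, Nat.descFactorial_self]
    simp [mul_comm]
  · intro i hi hne
    rw [Polynomial.iterate_derivative_C_mul, Polynomial.iterate_derivative_X_pow_eq_C_mul]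
    rcases lt_or_gt_of_ne hne with h | h
    · rw [Nat.descFactorial_eq_zero_iff_lt.2 h]
      simp
    · simp [zero_pow (show i - j ≠ 0 by omega)]
  · intro h
    exact absurd (Finset.mem_range.2 (by omega)) h

lemma p_deriv_aux (m i : ℕ) :
    Polynomial.derivative^[i] ((X : ℝ[X]) ^ m - X ^ (m - 1))
      = C ((m.descFactorial i : ℕ) : ℝ) * X ^ (m - i)
        - C (((m - 1).descFactorial i : ℕ) : ℝ) * X ^ (m - 1 - i) := by
  rw [Polynomial.iterate_derivative_sub, Polynomial.iterate_derivative_X_pow_eq_C_mul,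
    Polynomial.iterate_derivative_X_pow_eq_C_mul]

lemma key_step (m k : ℕ) (hm : 0 < m) :
    boxplus m ((X : ℝ[X]) ^ m - X ^ (m - 1))
        (∑ i ∈ Finset.range (m + 1), C (gco m k i) * X ^ i)
      = ∑ i ∈ Finset.range (m + 1), C (gco m (k + 1) i) * X ^ i := by
  unfold boxplus
  ext n
  rw [Polynomial.coeff_smul, Polynomial.finset_sum_coeff, Polynomial.finset_sum_coeff]
  have hL : ∀ i ∈ Finset.range (m + 1),
      (C ((Polynomial.derivative^[m - i]
          (∑ i ∈ Finset.range (m + 1), C (gco m k i) * X ^ i)).eval 0) *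
        Polynomial.derivative^[i] ((X : ℝ[X]) ^ m - X ^ (m - 1))).coeff n
      = (((m - i).factorial : ℝ) * gco m k (m - i)) *
          (((m.descFactorial i : ℕ) : ℝ) * (if n = m - i then 1 else 0))
        - (((m - i).factorial : ℝ) * gco m k (m - i)) *
          ((((m - 1).descFactorial i : ℕ) : ℝ) * (if n = m - 1 - i then 1 else 0)) := by
    intro i hi
    rw [deriv_eval_aux m k (m - i) (Nat.sub_le m i), p_deriv_aux]
    rw [mul_sub, Polynomial.coeff_sub, Polynomial.coeff_C_mul, Polynomial.coeff_C_mul,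
      Polynomial.coeff_C_mul, Polynomial.coeff_C_mul, Polynomial.coeff_X_pow,
      Polynomial.coeff_X_pow]
  rw [Finset.sum_congr rfl hL, Finset.sum_sub_distrib]
  have hR : ∀ j ∈ Finset.range (m + 1),
      (C (gco m (k + 1) j) * X ^ j).coeff n = gco m (k + 1) j * (if n = j then 1 else 0) := by
    intro j hj
    rw [Polynomial.coeff_C_mul, Polynomial.coeff_X_pow]
  rw [Finset.sum_congr rfl hR, smul_eq_mul]
  by_cases hn : n ≤ m
  · have hRs : (∑ j ∈ Finset.range (m + 1), gco m (k + 1) j * (if n = j then 1 else 0))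
        = gco m (k + 1) n := by
      rw [Finset.sum_eq_single n]
      · rw [if_pos rfl, mul_one]
      · intro j _ hne
        rw [if_neg (Ne.symm hne), mul_zero]
      · intro h; exact absurd (Finset.mem_range.2 (by omega)) h
    rw [hRs]
    have h1 : ∑ i ∈ Finset.range (m + 1),
        (((m - i).factorial : ℝ) * gco m k (m - i)) *
          (((m.descFactorial i : ℕ) : ℝ) * (if n = m - i then 1 else 0))
        = ((n.factorial : ℝ)) * gco m k n * ((m.descFactorial (m - n) : ℕ) : ℝ) := by
      rw [Finset.sum_eq_single (m - n)]
      · rw [if_pos (by omega), mul_one, show m - (m - n) = n by omega]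
      · intro i hi hne
        rw [if_neg (by simp only [Finset.mem_range] at hi; omega), mul_zero, mul_zero]
      · intro h; exact absurd (Finset.mem_range.2 (by omega)) h
    rw [h1]
    rcases eq_or_lt_of_le hn with hnm | hnm
    · -- n = m
      subst hnm
      have h2 : ∑ i ∈ Finset.range (n + 1),
          (((n - i).factorial : ℝ) * gco n k (n - i)) *
            ((((n - 1).descFactorial i : ℕ) : ℝ) * (if n = n - 1 - i then 1 else 0)) = 0 := by
        apply Finset.sum_eq_zero
        intro i hi
        rw [if_neg (by omega), mul_zero, mul_zero]
      rw [h2, sub_zero, Nat.sub_self, Nat.descFactorial_zero, Nat.cast_one, mul_one]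
      unfold gco
      rw [Nat.sub_self, Nat.choose_zero_right, Nat.choose_zero_right]
      have hfn : ((n.factorial : ℕ) : ℝ) ≠ 0 := Nat.cast_ne_zero.2 (Nat.factorial_ne_zero n)
      field_simp
    · -- n < m
      have h2 : ∑ i ∈ Finset.range (m + 1),
          (((m - i).factorial : ℝ) * gco m k (m - i)) *
            ((((m - 1).descFactorial i : ℕ) : ℝ) * (if n = m - 1 - i then 1 else 0))
          = (((n+1).factorial : ℝ)) * gco m k (n+1) * (((m-1).descFactorial (m-1-n) : ℕ) : ℝ) := by
        rw [Finset.sum_eq_single (m - 1 - n)]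
        · rw [if_pos (by omega), mul_one, show m - (m - 1 - n) = n + 1 by omega]
        · intro i hi hne
          by_cases hc : n = m - 1 - i
          · have him : m - 1 < i := by simp only [Finset.mem_range] at hi; omega
            rw [Nat.descFactorial_eq_zero_iff_lt.2 him, Nat.cast_zero, zero_mul, mul_zero]
          · rw [if_neg hc, mul_zero, mul_zero]
        · intro h; exact absurd (Finset.mem_range.2 (by omega)) h
      rw [h2]
      have hfn : ((n.factorial : ℕ) : ℝ) ≠ 0 := Nat.cast_ne_zero.2 (Nat.factorial_ne_zero n)
      have hd1 : ((m.descFactorial (m - n) : ℕ) : ℝ) = (m.factorial : ℝ) / (n.factorial : ℝ) := by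
        rw [eq_div_iff hfn]
        have h := Nat.factorial_mul_descFactorial (show m - n ≤ m by omega)
        rw [show m - (m - n) = n by omega] at h
        exact_mod_cast (mul_comm (n.factorial) (m.descFactorial (m - n))) ▸ h
      have hd2 : (((m - 1).descFactorial (m - 1 - n) : ℕ) : ℝ)
          = ((m - 1).factorial : ℝ) / (n.factorial : ℝ) := by
        rw [eq_div_iff hfn]
        have h := Nat.factorial_mul_descFactorial (show m - 1 - n ≤ m - 1 by omega)
        rw [show m - 1 - (m - 1 - n) = n by omega] at h
        exact_mod_cast (mul_comm (n.factorial) ((m-1).descFactorial (m - 1 - n))) ▸ h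
      have hch : ((k+1).choose (m - n) : ℝ)
          = (k.choose (m - n) : ℝ) + (k.choose (m - n - 1) : ℝ) := by
        rw [show m - n = (m - n - 1) + 1 by omega, Nat.choose_succ_succ]
        push_cast
        ring
      unfold gco
      rw [hd1, hd2, show m - (n + 1) = m - n - 1 by omega, hch]
      have hfn1 : (((n+1).factorial : ℕ) : ℝ) ≠ 0 := Nat.cast_ne_zero.2 (Nat.factorial_ne_zero _)
      have hfm1 : (((m-1).factorial : ℕ) : ℝ) ≠ 0 := Nat.cast_ne_zero.2 (Nat.factorial_ne_zero _)
      have hmne : (m : ℝ) ≠ 0 := Nat.cast_ne_zero.2 (by omega)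
      have hpm : (-(m : ℝ)) ^ m ≠ 0 := pow_ne_zero _ (by simpa using hmne)
      have hfm : (m.factorial : ℝ) = (m : ℝ) * ((m-1).factorial : ℝ) := by
        exact_mod_cast (Nat.mul_factorial_pred hm.ne').symm
      have hfns : (((n+1).factorial : ℕ) : ℝ) = ((n : ℝ) + 1) * (n.factorial : ℝ) := by
        rw [Nat.factorial_succ]; push_cast; ring
      rw [hfm, hfns, pow_succ]
      field_simp
      ring
  · have hS1 : ∑ i ∈ Finset.range (m + 1),
        (((m - i).factorial : ℝ) * gco m k (m - i)) *
          (((m.descFactorial i : ℕ) : ℝ) * (if n = m - i then 1 else 0)) = 0 :=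
      Finset.sum_eq_zero (fun i _ => by rw [if_neg (by omega), mul_zero, mul_zero])
    have hS2 : ∑ i ∈ Finset.range (m + 1),
        (((m - i).factorial : ℝ) * gco m k (m - i)) *
          ((((m - 1).descFactorial i : ℕ) : ℝ) * (if n = m - 1 - i then 1 else 0)) = 0 :=
      Finset.sum_eq_zero (fun i _ => by rw [if_neg (by omega), mul_zero, mul_zero])
    have hSR : ∑ j ∈ Finset.range (m + 1),
        gco m (k + 1) j * (if n = j then 1 else 0) = 0 :=
      Finset.sum_eq_zero (fun j hj => by
        rw [if_neg (by simp only [Finset.mem_range] at hj; omega), mul_zero])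
    rw [hS1, hS2, hSR, sub_zero, mul_zero]

lemma key (m k : ℕ) (hm : 0 < m) :
    boxplusPow m k ((X : ℝ[X]) ^ m - X ^ (m - 1))
      = ∑ i ∈ Finset.range (m + 1), C (gco m k i) * X ^ i := by
  induction k with
  | zero =>
    show (X : ℝ[X]) ^ m = _
    rw [Finset.sum_eq_single m]
    · have hg : gco m 0 m = 1 := by
        unfold gco
        rw [Nat.sub_self, Nat.choose_zero_right]
        have h1 : (-(m : ℝ)) ^ m ≠ 0 :=
          pow_ne_zero _ (by simp only [ne_eq, neg_eq_zero, Nat.cast_eq_zero]; omega)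
        have h2 : ((m.factorial : ℕ) : ℝ) ≠ 0 := Nat.cast_ne_zero.2 (Nat.factorial_ne_zero m)
        field_simp
        norm_num
      rw [hg, map_one, one_mul]
    · intro i hi hne
      have hg : gco m 0 i = 0 := by
        unfold gco
        rw [Nat.choose_eq_zero_of_lt (by simp only [Finset.mem_range] at hi; omega)]
        simp
      rw [hg, map_zero, zero_mul]
    · intro h; exact absurd (Finset.mem_range.2 (by omega)) h
  | succ k ih =>
    have h : boxplusPow m (k+1) ((X : ℝ[X]) ^ m - X ^ (m - 1))
        = boxplus m ((X : ℝ[X]) ^ m - X ^ (m - 1))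
            (boxplusPow m k ((X : ℝ[X]) ^ m - X ^ (m - 1))) := rfl
    rw [h, ih, key_step m k hm]

/-- **Finite free Poisson limit theorem.** For positive integers `m`, `k` and
`p(x) = x^{m-1}(x-1)`, the `k`-fold symmetric additive convolution of `p` with itself
equals `m!·(-m)^{-m} ∑_{i=0}^m ((-mx)^i / i!) C(k, m-i)`, i.e.
`m!(-m)^{-m} L_m^{(k-m)}(mx)` where `L` is the associated Laguerre polynomial. -/
theorem finite_free_poisson_limit (m k : ℕ) (hm : 0 < m) (hk : 0 < k) :
    boxplusPow m k ((X : ℝ[X]) ^ (m - 1) * ((X : ℝ[X]) - 1)) =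
      C ((m.factorial : ℝ) * ((-(m : ℝ)) ^ m)⁻¹) *
        ∑ i ∈ Finset.range (m + 1),
          C ((k.choose (m - i) : ℝ) / (i.factorial : ℝ)) *
            (C (-(m : ℝ)) * (X : ℝ[X])) ^ i := by
  have hp : (X : ℝ[X]) ^ (m - 1) * ((X : ℝ[X]) - 1) = (X : ℝ[X]) ^ m - X ^ (m - 1) := by
    rw [mul_sub, mul_one, ← pow_succ, show m - 1 + 1 = m by omega]
  rw [hp, key m k hm, Finset.mul_sum]
  apply Finset.sum_congr rfl
  intro i _
  rw [mul_pow, ← Polynomial.C_pow, ← mul_assoc, ← mul_assoc, ← Polynomial.C_mul,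
    ← Polynomial.C_mul]
  congr 1
  unfold gco
  ring
end
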